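/- Let W ∈ R^{n×k} have full column rank with QR factorization W = Q T (Q with orthonormal columns, T invertible upper triangular), and let P be a selection matrix with W^T P invertible. Then Q^T P is invertible and P (W^T P)^{-1} W^T = P (Q^T P)^{-1} Q^T. -/
import Mathlib

open Matrix

/-- A selection matrix: columns of the identity indexed by `p`. -/
def selectionMatrix {n k : ℕ} (p : Fin k → Fin n) : Matrix (Fin n) (Fin k) ℝ :=
  Matrix.of fun i j => if i = p j then 1 else 0

/-- If `W = Q T` is a QR factorization of the full-column-rank matrix `W` (with `Q` having
orthonormal columns and `T` invertible upper triangular), and `P` is a selection matrix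
with `Wᵀ P` invertible, then `Qᵀ P` is invertible and
`P (Wᵀ P)⁻¹ Wᵀ = P (Qᵀ P)⁻¹ Qᵀ`. -/
theorem interpolatory_projector_qr_eq {n k : ℕ}
    (W Q : Matrix (Fin n) (Fin k) ℝ) (T : Matrix (Fin k) (Fin k) ℝ)
    (hQR : W = Q * T) (hQ : Qᵀ * Q = 1)
    (hTtri : T.BlockTriangular (id : Fin k → Fin k)) (hT : IsUnit T.det)
    (p : Fin k → Fin n) (hp : Function.Injective p)
    (hinv : IsUnit (Wᵀ * selectionMatrix p).det) :
    IsUnit (Qᵀ * selectionMatrix p).det ∧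
    selectionMatrix p * (Wᵀ * selectionMatrix p)⁻¹ * Wᵀ =
      selectionMatrix p * (Qᵀ * selectionMatrix p)⁻¹ * Qᵀ := by
  have hW : Wᵀ * selectionMatrix p = Tᵀ * (Qᵀ * selectionMatrix p) := by
    rw [hQR, transpose_mul, Matrix.mul_assoc]
  have hdet : (Wᵀ * selectionMatrix p).det = Tᵀ.det * (Qᵀ * selectionMatrix p).det := by
    rw [hW, det_mul]
  have hQP : IsUnit (Qᵀ * selectionMatrix p).det := by
    rw [hdet] at hinv
    exact isUnit_of_mul_isUnit_right hinv
  refine ⟨hQP, ?_⟩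
  have hTunit : IsUnit Tᵀ.det := by rwa [det_transpose]
  have hinvW : (Wᵀ * selectionMatrix p)⁻¹ = (Qᵀ * selectionMatrix p)⁻¹ * Tᵀ⁻¹ := by
    rw [hW, Matrix.mul_inv_rev]
  rw [hinvW, hQR, transpose_mul]
  rw [Matrix.mul_assoc, Matrix.mul_assoc, ← Matrix.mul_assoc Tᵀ⁻¹,
    Matrix.nonsing_inv_mul _ hTunit, Matrix.one_mul, Matrix.mul_assoc]
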